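/- Let G be a 2×2 real matrix and N a positive integer such that ‖G^j‖ ≤ M for all 0 < j ≤ N, where M ≥ 1. Let G_j = G + Δ_j for j = 1,…,N with δ = max_{1 ≤ j ≤ N} ‖Δ_j‖. If N·M·δ < 1/2, then for every n ≤ N, ‖G_n · G_{n−1} ⋯ G_1 − G^n‖ ≤ 2 N M² δ. -/

import Mathlib

open scoped Matrix.Norms.L2Operator

/-- Perturbation of matrix products: if `‖G^j‖ ≤ M` for `0 < j ≤ N`, `G_j = G + Δ_j` with
`‖Δ_j‖ ≤ δ`, and `N M δ < 1/2`, then `‖G_n ⋯ G_1 − G^n‖ ≤ 2 N M² δ` for all `n ≤ N`. -/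
theorem stmt_3 (G : Matrix (Fin 2) (Fin 2) ℝ) (N : ℕ) (hN : 0 < N)
    (M : ℝ) (hM : 1 ≤ M) (hGj : ∀ j : ℕ, 0 < j → j ≤ N → ‖G ^ j‖ ≤ M)
    (Δ : ℕ → Matrix (Fin 2) (Fin 2) ℝ) (δ : ℝ)
    (hδ : ∀ j : ℕ, 1 ≤ j → j ≤ N → ‖Δ j‖ ≤ δ)
    (hsmall : (N : ℝ) * M * δ < 1 / 2) :
    ∀ n : ℕ, n ≤ N →
      ‖(List.ofFn (fun i : Fin n => G + Δ (n - (i : ℕ)))).prod - G ^ n‖ ≤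
        2 * N * M ^ 2 * δ := by
  have hδ0 : 0 ≤ δ := le_trans (norm_nonneg _) (hδ 1 le_rfl hN)
  have hM0 : (0:ℝ) < M := lt_of_lt_of_le one_pos hM
  set Q : ℕ → Matrix (Fin 2) (Fin 2) ℝ :=
    fun n => (List.ofFn (fun i : Fin n => G + Δ (n - (i : ℕ)))).prod with hQ
  have hQsucc : ∀ n, Q (n+1) = (G + Δ (n+1)) * Q n := by
    intro n
    have he : (fun i : Fin n => G + Δ (n + 1 - ((i.succ : ℕ)))) =
        fun i : Fin n => G + Δ (n - (i : ℕ)) := by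
      funext i
      congr 1
      simp [Fin.val_succ]
    simp only [hQ, List.ofFn_succ, List.prod_cons, he, Fin.val_zero, Nat.sub_zero]
  -- bound on ‖G^k‖ for k ≤ N
  have hGk : ∀ k : ℕ, k ≤ N → ‖G ^ k‖ ≤ M := by
    intro k hk
    rcases Nat.eq_zero_or_pos k with h0 | h0
    · subst h0; simpa using hM
    · exact hGj k h0 hk
  -- telescoping identity
  have key : ∀ n, Q n - G ^ n =
      ∑ j ∈ Finset.range n, G ^ (n - 1 - j) * Δ (j+1) * Q j := by
    intro n
    induction n with
    | zero => simp [hQ]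
    | succ n ih =>
      have expand : Q (n+1) - G ^ (n+1) = G * (Q n - G ^ n) + Δ (n+1) * Q n := by
        rw [hQsucc, pow_succ']
        noncomm_ring
      rw [expand, ih, Finset.mul_sum, Finset.sum_range_succ]
      congr 1
      · apply Finset.sum_congr rfl
        intro j hj
        have hjn : j < n := Finset.mem_range.mp hj
        have he : n - 1 - j + 1 = n + 1 - 1 - j := by omega
        rw [← mul_assoc, ← mul_assoc, ← pow_succ', he]
      · have : n + 1 - 1 - n = 0 := by omega
        rw [this, pow_zero, one_mul]
  intro n
  induction n using Nat.strong_induction_on with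
  | _ n ih =>
    intro hn
    show ‖Q n - G ^ n‖ ≤ 2 * N * M ^ 2 * δ
    have hQj : ∀ j, j < n → ‖Q j‖ ≤ 2 * M := by
      intro j hj
      have h1 : ‖Q j - G ^ j‖ ≤ 2 * N * M ^ 2 * δ := ih j hj (le_trans hj.le hn)
      have h2 : ‖G ^ j‖ ≤ M := hGk j (le_trans hj.le hn)
      have h3 : ‖Q j‖ ≤ ‖Q j - G ^ j‖ + ‖G ^ j‖ := by
        calc ‖Q j‖ = ‖(Q j - G ^ j) + G ^ j‖ := by congr 1; abel
        _ ≤ ‖Q j - G ^ j‖ + ‖G ^ j‖ := norm_add_le _ _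
      nlinarith
    rw [key]
    have term_bd : ∀ j ∈ Finset.range n, ‖G ^ (n - 1 - j) * Δ (j+1) * Q j‖ ≤ M * δ * (2 * M) := by
      intro j hj
      have hjn : j < n := Finset.mem_range.mp hj
      have hG : ‖G ^ (n - 1 - j)‖ ≤ M := hGk _ (by omega)
      have hD : ‖Δ (j+1)‖ ≤ δ := hδ (j+1) (by omega) (by omega)
      have hQb : ‖Q j‖ ≤ 2 * M := hQj j hjn
      calc ‖G ^ (n - 1 - j) * Δ (j+1) * Q j‖
          ≤ ‖G ^ (n - 1 - j) * Δ (j+1)‖ * ‖Q j‖ := norm_mul_le _ _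
        _ ≤ (‖G ^ (n - 1 - j)‖ * ‖Δ (j+1)‖) * ‖Q j‖ :=
            mul_le_mul_of_nonneg_right (norm_mul_le _ _) (norm_nonneg _)
        _ ≤ (M * δ) * (2 * M) :=
            mul_le_mul (mul_le_mul hG hD (norm_nonneg _) hM0.le) hQb (norm_nonneg _)
              (by positivity)
        _ = M * δ * (2 * M) := rfl
    calc ‖∑ j ∈ Finset.range n, G ^ (n - 1 - j) * Δ (j+1) * Q j‖
        ≤ ∑ j ∈ Finset.range n, ‖G ^ (n - 1 - j) * Δ (j+1) * Q j‖ := norm_sum_le _ _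
      _ ≤ ∑ _j ∈ Finset.range n, M * δ * (2 * M) := Finset.sum_le_sum term_bd
      _ = n * (M * δ * (2 * M)) := by simp [Finset.sum_const, mul_comm]
      _ ≤ 2 * N * M ^ 2 * δ := by
          have hnN : (n : ℝ) ≤ N := by exact_mod_cast hn
          calc (n : ℝ) * (M * δ * (2 * M)) ≤ (N : ℝ) * (M * δ * (2 * M)) :=
                mul_le_mul_of_nonneg_right hnN (by positivity)
            _ = 2 * N * M ^ 2 * δ := by ring
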